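/- Let X be a two-dimensional real Banach space. Suppose that every norm-one linear operator T : X → X that attains its norm at two linearly independent unit vectors is an extreme point of the unit ball of L(X). Then X is strictly convex. -/

import Mathlib

open Metric

/-- Birkhoff-James orthogonality: `x ⊥_B y` iff `‖x + t y‖ ≥ ‖x‖` for all real `t`. -/
def BJOrth {X : Type*} [NormedAddCommGroup X] [NormedSpace ℝ X] (x y : X) : Prop :=
  ∀ t : ℝ, ‖x‖ ≤ ‖x + t • y‖

/-- `(x, y)` is a compatible point pair with constant `(r, μ)`. -/
def IsCPPConst {X Y : Type*} [NormedAddCommGroup X] [NormedSpace ℝ X]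
    [NormedAddCommGroup Y] [NormedSpace ℝ Y] (x : X) (y : Y) (r μ : ℝ) : Prop :=
  ∀ z : X, ‖z‖ = 1 → BJOrth x z → ∀ w : Y, ‖w‖ = 1 → BJOrth y w →
    ∀ a b : ℝ, ‖a • x + b • z - x‖ ≤ r → ‖a • x + b • z‖ = 1 →
      ‖a • y + (b * μ) • w‖ ≤ 1

/-- `(x, y)` is a compatible point pair (CPP). -/
def IsCPP {X Y : Type*} [NormedAddCommGroup X] [NormedSpace ℝ X]
    [NormedAddCommGroup Y] [NormedSpace ℝ Y] (x : X) (y : Y) : Prop :=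
  ∃ r > 0, ∃ μ > 0, IsCPPConst x y r μ

/-- `(x, y)` is a weakly compatible point pair (weak CPP). -/
def IsWeakCPP {X Y : Type*} [NormedAddCommGroup X] [NormedSpace ℝ X]
    [NormedAddCommGroup Y] [NormedSpace ℝ Y] (x : X) (y : Y) : Prop :=
  ∃ z : X, ‖z‖ = 1 ∧ BJOrth x z ∧ ∃ w : Y, ‖w‖ = 1 ∧ BJOrth y w ∧
    ∃ r > 0, ∃ μ > 0, ∀ a b : ℝ, ‖a • x + b • z - x‖ ≤ r → ‖a • x + b • z‖ = 1 →
      ‖a • y + (b * μ) • w‖ ≤ 1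

/-- A normed space is smooth if every unit vector has a unique supporting functional. -/
def SmoothSp (X : Type*) [NormedAddCommGroup X] [NormedSpace ℝ X] : Prop :=
  ∀ x : X, ‖x‖ = 1 → ∃! f : X →L[ℝ] ℝ, ‖f‖ = 1 ∧ f x = 1

theorem stmt15 {X : Type*} [NormedAddCommGroup X] [NormedSpace ℝ X]
    [FiniteDimensional ℝ X] (hdX : Module.finrank ℝ X = 2)
    (h : ∀ T : X →L[ℝ] X, ‖T‖ = 1 →
      (∃ x y : X, ‖x‖ = 1 ∧ ‖y‖ = 1 ∧ LinearIndependent ℝ ![x, y] ∧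
        ‖T x‖ = 1 ∧ ‖T y‖ = 1) →
      T ∈ Set.extremePoints ℝ (closedBall (0 : X →L[ℝ] X) 1)) :
    StrictConvexSpace ℝ X := by

  refine StrictConvexSpace.of_norm_add_ne_two ?_
  intro x y hx hy hxy hsum
  set e : X := (2:ℝ)⁻¹ • (x + y) with he
  have he1 : ‖e‖ = 1 := by rw [he, norm_smul, hsum]; norm_num
  have hene : e ≠ 0 := by simp [← norm_pos_iff, he1]
  obtain ⟨g, hg1, hge⟩ := exists_dual_vector ℝ e (norm_ne_zero_iff.mpr hene)
  have hge' : g e = 1 := by simpa [he1] using hge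
  have hgxy : g x + g y = 2 := by
    have h2 : g ((2:ℝ)⁻¹ • (x + y)) = 1 := hge'
    rw [map_smul, map_add, smul_eq_mul] at h2
    linarith
  have hgx_le : g x ≤ 1 := by
    calc g x ≤ |g x| := le_abs_self _
    _ ≤ ‖g‖ * ‖x‖ := g.le_opNorm x
    _ = 1 := by rw [hg1, hx]; ring
  have hgy_le : g y ≤ 1 := by
    calc g y ≤ |g y| := le_abs_self _
    _ ≤ ‖g‖ * ‖y‖ := g.le_opNorm y
    _ = 1 := by rw [hg1, hy]; ring
  have hgx : g x = 1 := by linarith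
  have hgy : g y = 1 := by linarith
  set T : X →L[ℝ] X := g.smulRight e with hT
  set T₁ : X →L[ℝ] X := g.smulRight x with hT₁
  set T₂ : X →L[ℝ] X := g.smulRight y with hT₂
  have hTnorm : ‖T‖ = 1 := by
    rw [hT, ContinuousLinearMap.norm_smulRight_apply, hg1, he1]; ring
  have hTx : T x = e := by simp [hT, hgx]
  have hTy : T y = e := by simp [hT, hgy]
  have hxe : x ≠ e := by
    intro hxe
    apply hxy
    have h2 : (2:ℝ) • x = x + y := by
      have := congrArg (fun v : X => (2:ℝ) • v) hxe
      simpa [he, smul_smul] using this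
    rw [two_smul] at h2
    exact add_left_cancel h2
  have hli : LinearIndependent ℝ ![x, y] := by
    rw [LinearIndependent.pair_iff]
    intro s t hst
    have hg0 : s + t = 0 := by
      have := congrArg g hst
      simpa [map_add, map_smul, hgx, hgy] using this
    have ht : t = -s := by linarith
    rw [ht] at hst
    have hs0 : s • (x - y) = 0 := by
      rw [smul_sub]
      simpa [neg_smul, sub_eq_add_neg] using hst
    rcases smul_eq_zero.1 hs0 with hs | hxy'
    · exact ⟨hs, by rw [ht, hs, neg_zero]⟩
    · exact absurd (sub_eq_zero.1 hxy') hxy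
  have hmem := h T hTnorm ⟨x, y, hx, hy, hli, by rw [hTx]; exact he1, by rw [hTy]; exact he1⟩
  have hT₁mem : T₁ ∈ closedBall (0 : X →L[ℝ] X) 1 := by
    rw [mem_closedBall_zero_iff, hT₁, ContinuousLinearMap.norm_smulRight_apply, hg1, hx]; norm_num
  have hT₂mem : T₂ ∈ closedBall (0 : X →L[ℝ] X) 1 := by
    rw [mem_closedBall_zero_iff, hT₂, ContinuousLinearMap.norm_smulRight_apply, hg1, hy]; norm_num
  have hseg : T ∈ openSegment ℝ T₁ T₂ := by
    refine ⟨(2:ℝ)⁻¹, (2:ℝ)⁻¹, by norm_num, by norm_num, by norm_num, ?_⟩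
    ext z
    simp [hT, hT₁, hT₂, he, smul_smul, smul_add, mul_comm]
  have heq := (hmem.2 hT₁mem hT₂mem hseg)
  apply hxe
  have hx' : T₁ x = T x := by rw [heq]
  rw [hTx, hT₁] at hx'
  simpa [hgx] using hx'
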